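/- Let A be an integer m×n matrix with Graver basis G(A). Every nonzero integer vector x with Ax = 0 can be written as a conformal sum x = Σ_{i=1}^t λᵢ gᵢ with t ≤ 2n−1, each λᵢ a nonnegative integer, each gᵢ ∈ G(A), and each gᵢ lying in the same orthant as x. -/

import Mathlib

/-- The conformal partial order on ℤⁿ. -/
def IsConformal {n : ℕ} (x y : Fin n → ℤ) : Prop :=
  ∀ i, x i * y i ≥ 0 ∧ |x i| ≤ |y i|

/-- The Graver basis of an integer matrix. -/
def Graver {m n : ℕ} (A : Matrix (Fin m) (Fin n) ℤ) : Set (Fin n → ℤ) :=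
  {x | x ≠ 0 ∧ A.mulVec x = 0 ∧
    ∀ y : Fin n → ℤ, y ≠ 0 → A.mulVec y = 0 → IsConformal y x → y = x}

namespace CC

lemma key (a b : ℤ) (h1 : 0 ≤ a * b) (h2 : |a| ≤ |b|) :
    |b - a| = |b| - |a| ∧ 0 ≤ (b - a) * b ∧ (0 ≤ b → 0 ≤ a ∧ a ≤ b) ∧
      (b ≤ 0 → a ≤ 0 ∧ b ≤ a) := by
  rcases abs_cases a with ⟨ha1, ha2⟩ | ⟨ha1, ha2⟩ <;>
  rcases abs_cases b with ⟨hb1, hb2⟩ | ⟨hb1, hb2⟩ <;>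
  rcases abs_cases (b - a) with ⟨hc1, hc2⟩ | ⟨hc1, hc2⟩ <;>
  refine ⟨?_, ?_, fun h => ⟨?_, ?_⟩, fun h => ⟨?_, ?_⟩⟩ <;>
    simp only [ha1, hb1, hc1] at h2 hc2 ⊢ <;> nlinarith

lemma conf_trans {n : ℕ} {y g x : Fin n → ℤ} (h1 : IsConformal y g)
    (h2 : IsConformal g x) : IsConformal y x := by
  intro i
  obtain ⟨s1, a1⟩ := h1 i
  obtain ⟨s2, a2⟩ := h2 i
  refine ⟨?_, le_trans a1 a2⟩
  rcases lt_trichotomy (g i) 0 with hg | hg | hg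
  · have hy : y i ≤ 0 := by nlinarith
    have hx : x i ≤ 0 := by nlinarith
    nlinarith
  · have : |y i| ≤ 0 := by rw [hg] at a1; simpa using a1
    have : y i = 0 := by rwa [abs_nonpos_iff] at this
    simp [this]
  · have hy : 0 ≤ y i := by nlinarith
    have hx : 0 ≤ x i := by nlinarith
    nlinarith

lemma conf_refl {n : ℕ} (x : Fin n → ℤ) : IsConformal x x :=
  fun i => ⟨mul_self_nonneg _, le_refl _⟩

lemma conf_sub {n : ℕ} {g x : Fin n → ℤ} (h : IsConformal g x) :
    IsConformal (x - g) x := by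
  intro i
  obtain ⟨s, a⟩ := h i
  obtain ⟨h1, h2, -, -⟩ := key (g i) (x i) s a
  exact ⟨h2, by simp only [Pi.sub_apply] at *; rw [h1]; linarith [abs_nonneg (g i)]⟩

/-- l1 norm -/
def l1 {n : ℕ} (x : Fin n → ℤ) : ℕ := ∑ i, (x i).natAbs

lemma l1_eq_zero {n : ℕ} {x : Fin n → ℤ} (h : l1 x = 0) : x = 0 := by
  funext i
  have := Finset.sum_eq_zero_iff.mp h i (Finset.mem_univ i)
  simpa [Int.natAbs_eq_zero] using this

lemma conf_eq {n : ℕ} {y x : Fin n → ℤ} (h : IsConformal y x) (hl : l1 x ≤ l1 y) :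
    y = x := by
  have habs : ∀ i, (y i).natAbs = (x i).natAbs := by
    by_contra hc
    push_neg at hc
    obtain ⟨i, hi⟩ := hc
    have hlt : (y i).natAbs < (x i).natAbs := by
      have := (h i).2
      rw [Int.abs_eq_natAbs, Int.abs_eq_natAbs] at this
      omega
    have : l1 y < l1 x := by
      apply Finset.sum_lt_sum (fun j _ => ?_) ⟨i, Finset.mem_univ i, hlt⟩
      have := (h j).2
      rw [Int.abs_eq_natAbs, Int.abs_eq_natAbs] at this
      omega
    omega
  funext i
  obtain ⟨s, a⟩ := h i
  have := habs i
  rcases lt_trichotomy (x i) 0 with hx | hx | hx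
  · have : y i ≤ 0 := by nlinarith
    omega
  · omega
  · have : 0 ≤ y i := by nlinarith
    omega

lemma l1_sub {n : ℕ} {g x : Fin n → ℤ} (hc : IsConformal g x) :
    l1 (x - g) + l1 g = l1 x := by
  have hpt : ∀ i, ((x - g) i).natAbs = (x i).natAbs - (g i).natAbs ∧
      (g i).natAbs ≤ (x i).natAbs := by
    intro i
    obtain ⟨s, a⟩ := hc i
    obtain ⟨h1, -, -, -⟩ := key (g i) (x i) s a
    simp only [Pi.sub_apply]
    simp only [Int.abs_eq_natAbs] at h1 a
    omega
  unfold l1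
  rw [← Finset.sum_add_distrib]
  exact Finset.sum_congr rfl fun i _ => by have := hpt i; omega

end CC

namespace CC2
open CC

lemma l1_pos {n : ℕ} {g : Fin n → ℤ} (h : g ≠ 0) : 1 ≤ l1 g := by
  rcases Nat.eq_zero_or_pos (l1 g) with h0 | h0
  · exact absurd (l1_eq_zero h0) h
  · exact h0

lemma exists_graver_conf {m n : ℕ} (A : Matrix (Fin m) (Fin n) ℤ) :
    ∀ (k : ℕ) (y : Fin n → ℤ), l1 y ≤ k → y ≠ 0 → A.mulVec y = 0 →
      ∀ x, IsConformal y x → ∃ g ∈ Graver A, IsConformal g x := by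
  intro k
  induction k with
  | zero => exact fun y hy hy0 _ _ _ => absurd (l1_eq_zero (Nat.le_zero.mp hy)) hy0
  | succ k ih =>
    intro y hy hy0 hAy x hyx
    by_cases hG : y ∈ Graver A
    · exact ⟨y, hG, hyx⟩
    · simp only [Graver, Set.mem_setOf_eq] at hG
      push_neg at hG
      obtain ⟨z, hz0, hAz, hzy, hne⟩ := hG hy0 hAy
      have hlt : l1 z < l1 y := by
        by_contra hc
        exact hne (conf_eq hzy (le_of_not_gt hc))
      exact ih z (by omega) hz0 hAz x (conf_trans hzy hyx)

lemma exists_decomp {m n : ℕ} (A : Matrix (Fin m) (Fin n) ℤ) :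
    ∀ (k : ℕ) (y : Fin n → ℤ), l1 y ≤ k → A.mulVec y = 0 →
      ∃ (N : ℕ) (h : Fin N → Fin n → ℤ),
        (∀ j, h j ∈ Graver A ∧ IsConformal (h j) y) ∧ y = ∑ j, h j ∧ N ≤ l1 y := by
  intro k
  induction k with
  | zero =>
    intro y hy _
    refine ⟨0, fun j => 0, fun j => j.elim0, ?_, by omega⟩
    have : y = 0 := l1_eq_zero (Nat.le_zero.mp hy)
    simp [this]
  | succ k ih =>
    intro y hy hAy
    by_cases hy0 : y = 0
    · exact ⟨0, fun j => 0, fun j => j.elim0, by simp [hy0], by omega⟩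
    · obtain ⟨g, hgG, hgy⟩ := exists_graver_conf A (k+1) y hy hy0 hAy y (conf_refl y)
      have hAg : A.mulVec g = 0 := hgG.2.1
      have hg0 : g ≠ 0 := hgG.1
      have hsub := l1_sub hgy
      have hg1 : 1 ≤ l1 g := l1_pos hg0
      have hAy' : A.mulVec (y - g) = 0 := by
        rw [Matrix.mulVec_sub, hAy, hAg, sub_self]
      obtain ⟨N, h, hprop, hsum, hN⟩ := ih (y - g) (by omega) hAy'
      refine ⟨N + 1, Fin.cons g h, ?_, ?_, by omega⟩
      · intro j
        refine Fin.cases ?_ ?_ j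
        · exact ⟨hgG, hgy⟩
        · intro i
          simp only [Fin.cons_succ]
          exact ⟨(hprop i).1, conf_trans (hprop i).2 (conf_sub hgy)⟩
      · rw [Fin.sum_cons, ← hsum]
        abel
end CC2

namespace CC3
open CC

variable {m n : ℕ} (A : Matrix (Fin m) (Fin n) ℤ) (x : Fin n → ℤ)

/-- cast to ℚ -/
def qc {n : ℕ} (g : Fin n → ℤ) : Fin n → ℚ := fun j => (g j : ℚ)

lemma qc_sum {n N : ℕ} (h : Fin N → Fin n → ℤ) : qc (∑ k, h k) = ∑ k, qc (h k) := by
  funext j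
  simp [qc, Finset.sum_apply]

open Classical in
noncomputable def Cset : Finset (Fin n → ℤ) :=
  (Fintype.piFinset (fun j => Finset.Icc (-|x j|) |x j|)).filter
    (fun g => g ∈ Graver A ∧ IsConformal g x)

lemma mem_Cset {g : Fin n → ℤ} :
    g ∈ Cset A x ↔ g ∈ Graver A ∧ IsConformal g x := by
  classical
  simp only [Cset, Finset.mem_filter, Fintype.mem_piFinset, Finset.mem_Icc]
  constructor
  · tauto
  · intro h
    exact ⟨fun j => abs_le.mp (h.2 j).2, h⟩

lemma coord_sign {g : Fin n → ℤ} (hg : g ∈ Cset A x) (j : Fin n) :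
    (0 ≤ x j → 0 ≤ (g j : ℚ)) ∧ (x j ≤ 0 → (g j : ℚ) ≤ 0) := by
  obtain ⟨-, hconf⟩ := (mem_Cset A x).mp hg
  obtain ⟨hs, ha⟩ := hconf j
  obtain ⟨-, -, h1, h2⟩ := key (g j) (x j) hs ha
  exact ⟨fun h => by exact_mod_cast (h1 h).1, fun h => by exact_mod_cast (h2 h).1⟩

lemma abs_sum_coord (w : (Fin n → ℤ) → ℚ) (hw : ∀ g ∈ Cset A x, 0 ≤ w g) (j : Fin n) :
    |∑ g ∈ Cset A x, w g * (g j : ℚ)| = ∑ g ∈ Cset A x, w g * |(g j : ℚ)| := by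
  rcases le_total 0 (x j) with hx | hx
  · rw [abs_of_nonneg (Finset.sum_nonneg fun g hg =>
      mul_nonneg (hw g hg) ((coord_sign A x hg j).1 hx))]
    exact Finset.sum_congr rfl fun g hg => by
      rw [abs_of_nonneg ((coord_sign A x hg j).1 hx)]
  · rw [abs_of_nonpos (Finset.sum_nonpos fun g hg =>
      mul_nonpos_of_nonneg_of_nonpos (hw g hg) ((coord_sign A x hg j).2 hx)),
      ← Finset.sum_neg_distrib]
    exact Finset.sum_congr rfl fun g hg => by
      rw [abs_of_nonpos ((coord_sign A x hg j).2 hx)]; ring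

lemma l1_cast (g : Fin n → ℤ) : ∑ j, |(g j : ℚ)| = (l1 g : ℚ) := by
  unfold l1
  push_cast [Nat.cast_natAbs]
  rfl

lemma nonneg_dep_zero (d : (Fin n → ℤ) → ℚ) (hd : ∀ g ∈ Cset A x, 0 ≤ d g)
    (hsum : ∑ g ∈ Cset A x, d g • qc g = 0) : ∀ g ∈ Cset A x, d g = 0 := by
  have hcoord : ∀ j, ∑ g ∈ Cset A x, d g * |(g j : ℚ)| = 0 := by
    intro j
    have h0 : ∑ g ∈ Cset A x, d g * (g j : ℚ) = 0 := by
      have := congrFun hsum j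
      simpa [Finset.sum_apply, qc] using this
    rw [← abs_sum_coord A x d hd j, h0, abs_zero]
  have htot : ∑ g ∈ Cset A x, d g * (l1 g : ℚ) = 0 := by
    have : ∑ j, ∑ g ∈ Cset A x, d g * |(g j : ℚ)| = 0 :=
      Finset.sum_eq_zero fun j _ => hcoord j
    rw [Finset.sum_comm] at this
    rw [← this]
    exact Finset.sum_congr rfl fun g _ => by
      rw [← Finset.mul_sum, l1_cast]
  intro g hg
  have hterm := (Finset.sum_eq_zero_iff_of_nonneg fun g hg =>
    mul_nonneg (hd g hg) (by positivity)).mp htot g hg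
  have hg0 : g ≠ 0 := ((mem_Cset A x).mp hg).1.1
  have : (1 : ℚ) ≤ (l1 g : ℚ) := by
    have : 1 ≤ l1 g := by
      rcases Nat.eq_zero_or_pos (l1 g) with h0 | h0
      · exact absurd (l1_eq_zero h0) hg0
      · exact h0
    exact_mod_cast this
  rcases mul_eq_zero.mp hterm with h | h
  · exact h
  · rw [h] at this; norm_num at this

/-- feasibility -/
def Feas (lam : (Fin n → ℤ) → ℚ) : Prop :=
  (∀ g, 0 ≤ lam g) ∧ (∀ g ∉ Cset A x, lam g = 0) ∧
    ∑ g ∈ Cset A x, lam g • qc g = qc x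

open Classical in
noncomputable def supp (lam : (Fin n → ℤ) → ℚ) : Finset (Fin n → ℤ) :=
  (Cset A x).filter (fun g => lam g ≠ 0)

lemma supp_subset (lam) : supp A x lam ⊆ Cset A x := Finset.filter_subset _ _

lemma not_mem_supp {lam} {g} (hg : g ∈ Cset A x) (h : g ∉ supp A x lam) : lam g = 0 := by
  classical
  by_contra hc
  exact h (by simp [supp, hg, hc])


section Reduce
open CC
variable {m n : ℕ} (A : Matrix (Fin m) (Fin n) ℤ) (x : Fin n → ℤ)

lemma reduce : ∀ (k : ℕ) (lam : (Fin n → ℤ) → ℚ), Feas A x lam →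
    (supp A x lam).card ≤ k →
    ∃ lam', Feas A x lam' ∧
      (∑ g ∈ Cset A x, lam g) ≤ (∑ g ∈ Cset A x, lam' g) ∧
      LinearIndependent ℚ (fun g : ↥(supp A x lam') => qc (g : Fin n → ℤ)) := by
  intro k
  induction k with
  | zero =>
    intro lam hf hcard
    have hempty : supp A x lam = ∅ := Finset.card_eq_zero.mp (Nat.le_zero.mp hcard)
    haveI : IsEmpty ↥(supp A x lam) := by
      rw [hempty]; exact Finset.isEmpty_coe_sort.mpr rfl
    exact ⟨lam, hf, le_rfl, linearIndependent_empty_type⟩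
  | succ k ih =>
    intro lam hf hcard
    by_cases hind : LinearIndependent ℚ (fun g : ↥(supp A x lam) => qc (g : Fin n → ℤ))
    · exact ⟨lam, hf, le_rfl, hind⟩
    · obtain ⟨c, hc0, i0, hi0⟩ := Fintype.not_linearIndependent_iff.mp hind
      classical
      set c' : (Fin n → ℤ) → ℚ :=
        fun g => if h : g ∈ supp A x lam then c ⟨g, h⟩ else 0 with hc'def
      have hci0 : c' (↑i0) = c i0 := by simp [hc'def]
      have hc'out : ∀ g ∉ supp A x lam, c' g = 0 := by
        intro g hg; simp [hc'def, hg]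
      have hc'supp : ∑ g ∈ supp A x lam, c' g • qc g = 0 := by
        rw [← Finset.sum_coe_sort]
        rw [← hc0]
        exact Finset.sum_congr rfl fun i _ => by simp [hc'def, i.2]
      have main : ∀ d : (Fin n → ℤ) → ℚ, (∀ g ∉ supp A x lam, d g = 0) →
          (∑ g ∈ supp A x lam, d g • qc g = 0) →
          (∀ g ∈ supp A x lam, 0 ≤ d g) → ∀ g ∈ supp A x lam, d g = 0 := by
        intro d hout hdep hnn
        have hCset : ∑ g ∈ Cset A x, d g • qc g = 0 :=
          ((Finset.sum_subset (supp_subset A x lam)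
            (fun g _ hns => by rw [hout g hns, zero_smul])).symm).trans hdep
        intro g hg
        refine nonneg_dep_zero A x d (fun g' hgc => ?_) hCset g (supp_subset A x lam hg)
        by_cases h : g' ∈ supp A x lam
        · exact hnn g' h
        · rw [hout g' h]
      have negentry : ∀ d : (Fin n → ℤ) → ℚ, (∀ g ∉ supp A x lam, d g = 0) →
          (∑ g ∈ supp A x lam, d g • qc g = 0) → d (↑i0) ≠ 0 →
          ∃ g₀ ∈ supp A x lam, d g₀ < 0 := by
        intro d h1 h2 h3
        by_contra hc
        push_neg at hc
        exact h3 (main d h1 h2 hc (↑i0) i0.2)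
      have horient : ∃ d : (Fin n → ℤ) → ℚ, (∀ g ∉ supp A x lam, d g = 0) ∧
          (∑ g ∈ supp A x lam, d g • qc g = 0) ∧
          (0 ≤ ∑ g ∈ supp A x lam, d g) ∧ ∃ g₀ ∈ supp A x lam, d g₀ < 0 := by
        rcases le_total 0 (∑ g ∈ supp A x lam, c' g) with hs | hs
        · exact ⟨c', hc'out, hc'supp, hs,
            negentry c' hc'out hc'supp (by rw [hci0]; exact hi0)⟩
        · have hout : ∀ g ∉ supp A x lam, -(c' g) = 0 :=
            fun g hg => by rw [hc'out g hg, neg_zero]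
          have hdep : ∑ g ∈ supp A x lam, -(c' g) • qc g = 0 := by
            have heq : ∑ g ∈ supp A x lam, -(c' g) • qc g =
                -∑ g ∈ supp A x lam, c' g • qc g := by
              rw [← Finset.sum_neg_distrib]
              exact Finset.sum_congr rfl fun g _ => by rw [neg_smul]
            rw [heq, hc'supp, neg_zero]
          have hge : 0 ≤ ∑ g ∈ supp A x lam, -(c' g) := by
            rw [Finset.sum_neg_distrib]
            linarith
          exact ⟨fun g => -(c' g), hout, hdep, hge,
            negentry _ hout hdep (by rw [hci0]; simpa using hi0)⟩
      obtain ⟨d, hdout, hddep, hdsum, g₀, hg₀supp, hg₀neg⟩ := horient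
      have hdCset : ∑ g ∈ Cset A x, d g • qc g = 0 :=
        ((Finset.sum_subset (supp_subset A x lam)
          (fun g _ hns => by rw [hdout g hns, zero_smul])).symm).trans hddep
      have hdCsum : ∑ g ∈ Cset A x, d g = ∑ g ∈ supp A x lam, d g :=
        (Finset.sum_subset (supp_subset A x lam)
          (fun g _ hns => hdout g hns)).symm
      set T := (supp A x lam).filter (fun g => d g < 0) with hTdef
      have hTne : T.Nonempty := ⟨g₀, Finset.mem_filter.mpr ⟨hg₀supp, hg₀neg⟩⟩
      set t := T.inf' hTne (fun g => lam g / (-(d g))) with htdef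
      have ht0 : 0 ≤ t := by
        apply Finset.le_inf'
        intro b hb
        have hdb : d b < 0 := (Finset.mem_filter.mp hb).2
        exact div_nonneg (hf.1 b) (by linarith)
      set lam' : (Fin n → ℤ) → ℚ := fun g => lam g + t * d g with hlam'def
      obtain ⟨g₁, hg₁T, hg₁eq⟩ := Finset.exists_mem_eq_inf' hTne (fun g => lam g / (-(d g)))
      have hd₁ : d g₁ < 0 := (Finset.mem_filter.mp hg₁T).2
      have hg₁supp : g₁ ∈ supp A x lam := (Finset.mem_filter.mp hg₁T).1
      have hlam'g₁ : lam' g₁ = 0 := by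
        have hd₁' : d g₁ ≠ 0 := ne_of_lt hd₁
        show lam g₁ + t * d g₁ = 0
        rw [htdef, hg₁eq]
        field_simp
        ring
      have hfeas' : Feas A x lam' := by
        refine ⟨?_, ?_, ?_⟩
        · intro g
          rcases lt_or_ge (d g) 0 with hdg | hdg
          · by_cases hgs : g ∈ supp A x lam
            · have hgT : g ∈ T := Finset.mem_filter.mpr ⟨hgs, hdg⟩
              have hle : t ≤ lam g / (-(d g)) := Finset.inf'_le _ hgT
              have : t * (-(d g)) ≤ lam g := by
                rw [← le_div_iff₀ (by linarith)]
                exact hle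
              simp only [hlam'def]
              nlinarith
            · rw [hdout g hgs] at hdg; norm_num at hdg
          · have := hf.1 g
            simp only [hlam'def]
            nlinarith
        · intro g hg
          have hgs : g ∉ supp A x lam := fun h => hg (supp_subset A x lam h)
          simp only [hlam'def]
          rw [hdout g hgs, hf.2.1 g hg]
          ring
        · have : ∑ g ∈ Cset A x, lam' g • qc g =
              ∑ g ∈ Cset A x, (lam g • qc g + t • (d g • qc g)) :=
            Finset.sum_congr rfl fun g _ => by
              simp only [hlam'def]; rw [add_smul, mul_smul]
          rw [this, Finset.sum_add_distrib, ← Finset.smul_sum, hdCset, smul_zero,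
            add_zero]
          exact hf.2.2
      have hobj : ∑ g ∈ Cset A x, lam g ≤ ∑ g ∈ Cset A x, lam' g := by
        have : ∑ g ∈ Cset A x, lam' g =
            (∑ g ∈ Cset A x, lam g) + t * ∑ g ∈ Cset A x, d g := by
          rw [Finset.mul_sum, ← Finset.sum_add_distrib]
        rw [this, hdCsum]
        nlinarith
      have hsupp' : supp A x lam' ⊆ (supp A x lam).erase g₁ := by
        intro g hg
        have hgC : g ∈ Cset A x := supp_subset A x lam' hg
        have hgne : lam' g ≠ 0 := (Finset.mem_filter.mp hg).2
        rw [Finset.mem_erase]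
        constructor
        · rintro rfl
          exact hgne hlam'g₁
        · by_contra hgs
          apply hgne
          simp only [hlam'def]
          rw [hdout g hgs, not_mem_supp A x hgC hgs]
          ring
      have hcard' : (supp A x lam').card ≤ k := by
        have h1 := Finset.card_le_card hsupp'
        rw [Finset.card_erase_of_mem hg₁supp] at h1
        have h2 : 1 ≤ (supp A x lam).card := Finset.card_pos.mpr ⟨g₁, hg₁supp⟩
        omega
      obtain ⟨lam'', hf'', hobj'', hind''⟩ := ih lam' hfeas' hcard'
      exact ⟨lam'', hf'', le_trans hobj hobj'', hind''⟩

end Reduce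


section Opt
open CC
variable {m n : ℕ} (A : Matrix (Fin m) (Fin n) ℤ) (x : Fin n → ℤ)

open Classical in
noncomputable def cnt {N n : ℕ} (h : Fin N → Fin n → ℤ) (g : Fin n → ℤ) : ℕ :=
  (Finset.univ.filter fun k => h k = g).card

lemma cnt_smul_sum {N : ℕ} (h : Fin N → Fin n → ℤ) (hmem : ∀ k, h k ∈ Cset A x) :
    ∑ g ∈ Cset A x, ((cnt h g : ℚ)) • qc g = ∑ k, qc (h k) := by
  classical
  rw [← Finset.sum_fiberwise_of_maps_to (fun k _ => hmem k) (fun k => qc (h k))]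
  refine Finset.sum_congr rfl fun g hg => ?_
  rw [Finset.sum_congr rfl (fun k hk => by rw [(Finset.mem_filter.mp hk).2] :
    ∀ k ∈ Finset.univ.filter fun k => h k = g, qc (h k) = qc g)]
  rw [Finset.sum_const, ← Nat.cast_smul_eq_nsmul ℚ]
  rfl

lemma cnt_total {N : ℕ} (h : Fin N → Fin n → ℤ) (hmem : ∀ k, h k ∈ Cset A x) :
    ∑ g ∈ Cset A x, (cnt h g : ℚ) = N := by
  classical
  have h2 := Finset.sum_fiberwise_of_maps_to (fun k (_ : k ∈ Finset.univ) => hmem k)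
    (fun _ => (1 : ℕ))
  simp only [Finset.sum_const, smul_eq_mul, mul_one, Finset.card_univ,
    Fintype.card_fin] at h2
  have h3 : ∑ g ∈ Cset A x, cnt h g = N := h2
  exact_mod_cast h3

lemma cnt_nonmem {N : ℕ} (h : Fin N → Fin n → ℤ) (hmem : ∀ k, h k ∈ Cset A x)
    {g : Fin n → ℤ} (hg : g ∉ Cset A x) : cnt h g = 0 := by
  classical
  rw [cnt, Finset.card_eq_zero, Finset.filter_eq_empty_iff]
  intro k _
  rintro rfl
  exact hg (hmem k)

lemma exists_optimal (hne : ∃ lam, Feas A x lam) :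
    ∃ lamstar, Feas A x lamstar ∧
      LinearIndependent ℚ (fun g : ↥(supp A x lamstar) => qc (g : Fin n → ℤ)) ∧
      ∀ lam, Feas A x lam →
        ∑ g ∈ Cset A x, lam g ≤ ∑ g ∈ Cset A x, lamstar g := by
  obtain ⟨lam₀, hf₀⟩ := hne
  set F : Set ((Fin n → ℤ) → ℚ) := {lam | Feas A x lam ∧
    LinearIndependent ℚ (fun g : ↥(supp A x lam) => qc (g : Fin n → ℤ))} with hFdef
  have hFne : F.Nonempty := by
    obtain ⟨lam', hf', _, hind⟩ := reduce A x (supp A x lam₀).card lam₀ hf₀ le_rfl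
    exact ⟨lam', hf', hind⟩
  have hinj : Set.InjOn (supp A x) F := by
    intro l1 hl1 l2 hl2 heq
    funext g
    by_cases hgC : g ∈ Cset A x
    · by_cases hgs : g ∈ supp A x l1
      · have hsum : ∑ i : ↥(supp A x l1), (l1 (↑i) - l2 (↑i)) • qc (↑i : Fin n → ℤ) = 0 := by
          rw [Finset.sum_coe_sort (supp A x l1)
            (fun g => (l1 g - l2 g) • qc g)]
          have e1 : ∑ g ∈ supp A x l1, l1 g • qc g = qc x := by
            rw [Finset.sum_subset (supp_subset A x l1)
              (fun g hg hns => by rw [not_mem_supp A x hg hns, zero_smul])]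
            exact hl1.1.2.2
          have e2 : ∑ g ∈ supp A x l1, l2 g • qc g = qc x := by
            rw [heq]
            rw [Finset.sum_subset (supp_subset A x l2)
              (fun g hg hns => by rw [not_mem_supp A x hg hns, zero_smul])]
            exact hl2.1.2.2
          have : ∀ g ∈ supp A x l1, (l1 g - l2 g) • qc g =
              l1 g • qc g - l2 g • qc g := fun g _ => sub_smul _ _ _
          rw [Finset.sum_congr rfl this, Finset.sum_sub_distrib, e1, e2, sub_self]
        have := Fintype.linearIndependent_iff.mp hl1.2
          (fun i => l1 (↑i) - l2 (↑i)) hsum ⟨g, hgs⟩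
        have : l1 g - l2 g = 0 := this
        linarith
      · have h1 : l1 g = 0 := not_mem_supp A x hgC hgs
        have hgs2 : g ∉ supp A x l2 := by rw [← heq]; exact hgs
        have h2 : l2 g = 0 := not_mem_supp A x hgC hgs2
        rw [h1, h2]
    · rw [hl1.1.2.1 g hgC, hl2.1.2.1 g hgC]
  have himg : (supp A x '' F) ⊆ ↑(Cset A x).powerset := by
    rintro _ ⟨lam, -, rfl⟩
    simp only [Finset.coe_powerset, Set.mem_preimage, Set.mem_powerset_iff,
      Finset.coe_subset]
    exact supp_subset A x lam
  have hFfin : F.Finite :=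
    Set.Finite.of_finite_image
      (Set.Finite.subset (Finset.finite_toSet _) himg) hinj
  obtain ⟨lamstar, hstarF, hmax⟩ :=
    Set.exists_max_image F (fun lam => ∑ g ∈ Cset A x, lam g) hFfin hFne
  refine ⟨lamstar, hstarF.1, hstarF.2, ?_⟩
  intro lam hf
  obtain ⟨lam', hf', hobj, hind⟩ := reduce A x (supp A x lam).card lam hf le_rfl
  exact le_trans hobj (hmax lam' ⟨hf', hind⟩)

end Opt


section Final
open CC CC2
variable {m n : ℕ} (A : Matrix (Fin m) (Fin n) ℤ) (x : Fin n → ℤ)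

lemma mul_nonneg_of_nonpos_nonpos' {a b : ℤ} (ha : a ≤ 0) (hb : b ≤ 0) : 0 ≤ a * b := by nlinarith

lemma final (hx : x ≠ 0) (hAx : A.mulVec x = 0) :
    ∃ (t : ℕ), t ≤ 2 * n - 1 ∧
      ∃ (lam : Fin t → ℕ) (g : Fin t → Fin n → ℤ),
        (∀ i, g i ∈ Graver A) ∧ (∀ i j, g i j * x j ≥ 0) ∧
        x = ∑ i, (lam i : ℤ) • g i := by
  classical
  have hn : 0 < n := by
    rcases Nat.eq_zero_or_pos n with h | h
    · subst h
      exact absurd (funext fun i => i.elim0) hx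
    · exact h
  -- feasible solution from integer decomposition of x
  obtain ⟨N₀, h₀, hprop₀, hsum₀, -⟩ := exists_decomp A (l1 x) x le_rfl hAx
  have hmem₀ : ∀ k, h₀ k ∈ Cset A x :=
    fun k => (mem_Cset A x).mpr ⟨(hprop₀ k).1, (hprop₀ k).2⟩
  have hfeas₀ : Feas A x (fun g => (cnt h₀ g : ℚ)) := by
    refine ⟨fun g => by positivity, fun g hg => by
      show ((cnt h₀ g : ℕ) : ℚ) = 0
      rw [cnt_nonmem A x h₀ hmem₀ hg]; norm_num, ?_⟩
    rw [cnt_smul_sum A x h₀ hmem₀, ← qc_sum, ← hsum₀]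
  obtain ⟨ls, hfs, hind, hopt⟩ := exists_optimal A x ⟨_, hfeas₀⟩
  obtain ⟨hpos, hvan, hsum⟩ := hfs
  -- floor
  set μ : (Fin n → ℤ) → ℕ := fun g => (⌊ls g⌋).toNat with hμdef
  have hμcastZ : ∀ g, ((μ g : ℤ) : ℚ) = ((⌊ls g⌋ : ℤ) : ℚ) := by
    intro g
    have h0 : 0 ≤ ⌊ls g⌋ := Int.floor_nonneg.mpr (hpos g)
    rw [hμdef]
    exact_mod_cast congrArg (fun z : ℤ => (z : ℚ)) (Int.toNat_of_nonneg h0)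
  have hμle : ∀ g, ((μ g : ℚ)) ≤ ls g := by
    intro g
    have : ((μ g : ℤ) : ℚ) ≤ ls g := by rw [hμcastZ g]; exact Int.floor_le _
    exact_mod_cast this
  have hμlt : ∀ g, ls g - (μ g : ℚ) < 1 := by
    intro g
    have h1 : ls g < (⌊ls g⌋ : ℚ) + 1 := Int.lt_floor_add_one _
    have : ((μ g : ℤ) : ℚ) = ((⌊ls g⌋ : ℤ) : ℚ) := hμcastZ g
    push_cast at this ⊢
    linarith
  have hμ0 : ∀ g, ls g = 0 → μ g = 0 := by
    intro g hg
    rw [hμdef]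
    simp [hg]
  -- residual
  set r : Fin n → ℤ := x - ∑ g ∈ Cset A x, (μ g : ℤ) • g with hrdef
  set w : (Fin n → ℤ) → ℚ := fun g => ls g - (μ g : ℚ) with hwdef
  have hw0 : ∀ g ∈ Cset A x, 0 ≤ w g := fun g _ => by
    rw [hwdef]; simp only; linarith [hμle g]
  have hsumj : ∀ j, ∑ g ∈ Cset A x, ls g * (g j : ℚ) = (x j : ℚ) := by
    intro j
    have := congrFun hsum j
    simpa [Finset.sum_apply, qc] using this
  have hrq : ∀ j, (r j : ℚ) = ∑ g ∈ Cset A x, w g * (g j : ℚ) := by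
    intro j
    have h1 : r j = x j - ∑ g ∈ Cset A x, (μ g : ℤ) * g j := by
      rw [hrdef]
      simp [Finset.sum_apply]
    have h2 : ∑ g ∈ Cset A x, w g * (g j : ℚ) =
        (∑ g ∈ Cset A x, ls g * (g j : ℚ)) -
        ∑ g ∈ Cset A x, (μ g : ℚ) * (g j : ℚ) := by
      rw [← Finset.sum_sub_distrib]
      exact Finset.sum_congr rfl fun g _ => by rw [hwdef]; ring
    rw [h2, hsumj j, h1]
    push_cast
    ring
  -- A r = 0
  have hAr : A.mulVec r = 0 := by
    rw [hrdef, Matrix.mulVec_sub, hAx]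
    have : A.mulVec (∑ g ∈ Cset A x, (μ g : ℤ) • g) = 0 := by
      rw [← Matrix.mulVecLin_apply, map_sum]
      rw [Finset.sum_congr rfl (fun g hg => ?_), Finset.sum_const, smul_zero]
      rw [LinearMap.map_smul, Matrix.mulVecLin_apply,
        ((mem_Cset A x).mp hg).1.2.1, smul_zero]
    rw [this, sub_zero]
  -- r conformal to x
  have hconf_r : IsConformal r x := by
    intro j
    have habs : |(r j : ℚ)| ≤ |(x j : ℚ)| := by
      rw [hrq j, abs_sum_coord A x w hw0 j]
      have h1 : ∑ g ∈ Cset A x, w g * |(g j : ℚ)| ≤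
          ∑ g ∈ Cset A x, ls g * |(g j : ℚ)| := by
        refine Finset.sum_le_sum fun g hg => ?_
        have hwle : w g ≤ ls g := by
          rw [hwdef]
          simp only
          have h0 : (0 : ℚ) ≤ (μ g : ℚ) := Nat.cast_nonneg _
          linarith
        exact mul_le_mul_of_nonneg_right hwle (abs_nonneg _)
      calc ∑ g ∈ Cset A x, w g * |(g j : ℚ)| ≤
            ∑ g ∈ Cset A x, ls g * |(g j : ℚ)| := h1
        _ = |∑ g ∈ Cset A x, ls g * (g j : ℚ)| :=
            (abs_sum_coord A x ls (fun g _ => hpos g) j).symm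
        _ = |(x j : ℚ)| := by rw [hsumj j]
    have hsign : r j * x j ≥ 0 := by
      rcases le_total 0 (x j) with hxj | hxj
      · have : 0 ≤ (r j : ℚ) := by
          rw [hrq j]
          exact Finset.sum_nonneg fun g hg =>
            mul_nonneg (hw0 g hg) ((coord_sign A x hg j).1 hxj)
        have : 0 ≤ r j := by exact_mod_cast this
        exact mul_nonneg this hxj
      · have : (r j : ℚ) ≤ 0 := by
          rw [hrq j]
          exact Finset.sum_nonpos fun g hg =>
            mul_nonpos_of_nonneg_of_nonpos (hw0 g hg) ((coord_sign A x hg j).2 hxj)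
        have : r j ≤ 0 := by exact_mod_cast this
        exact mul_nonneg_of_nonpos_nonpos' this hxj
    refine ⟨hsign, ?_⟩
    have : |(r j : ℚ)| ≤ |(x j : ℚ)| := habs
    rw [← Int.cast_abs, ← Int.cast_abs] at this
    exact_mod_cast this
  -- decompose r
  obtain ⟨N, hh, hhprop, hhsum, -⟩ := exists_decomp A (l1 r) r le_rfl hAr
  have hhmem : ∀ k, hh k ∈ Cset A x := fun k =>
    (mem_Cset A x).mpr ⟨(hhprop k).1, conf_trans (hhprop k).2 hconf_r⟩
  -- optimality comparison
  have hνfeas : Feas A x (fun g => (μ g : ℚ) + (cnt hh g : ℚ)) := by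
    refine ⟨fun g => by positivity, ?_, ?_⟩
    · intro g hg
      show (μ g : ℚ) + ((cnt hh g : ℕ) : ℚ) = 0
      rw [cnt_nonmem A x hh hhmem hg, hμ0 g (hvan g hg)]
      norm_num
    · have hsplit : ∑ g ∈ Cset A x, ((μ g : ℚ) + (cnt hh g : ℚ)) • qc g =
          (∑ g ∈ Cset A x, (μ g : ℚ) • qc g) +
          ∑ g ∈ Cset A x, (cnt hh g : ℚ) • qc g := by
        rw [← Finset.sum_add_distrib]
        exact Finset.sum_congr rfl fun g _ => add_smul _ _ _
      rw [hsplit, cnt_smul_sum A x hh hhmem, ← qc_sum, ← hhsum]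
      have hqr : qc r = qc x - ∑ g ∈ Cset A x, (μ g : ℚ) • qc g := by
        funext j
        rw [Pi.sub_apply]
        have : (∑ g ∈ Cset A x, (μ g : ℚ) • qc g) j =
            ∑ g ∈ Cset A x, (μ g : ℚ) * (g j : ℚ) := by
          simp [Finset.sum_apply, qc]
        rw [this]
        show (r j : ℚ) = (x j : ℚ) - _
        rw [hrq j]
        have h2 : ∑ g ∈ Cset A x, w g * (g j : ℚ) =
            (∑ g ∈ Cset A x, ls g * (g j : ℚ)) -
            ∑ g ∈ Cset A x, (μ g : ℚ) * (g j : ℚ) := by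
          rw [← Finset.sum_sub_distrib]
          exact Finset.sum_congr rfl fun g _ => by rw [hwdef]; ring
        rw [h2, hsumj j]
      rw [hqr]
      abel
  have hcompare := hopt _ hνfeas
  have hNle : (N : ℚ) ≤ ∑ g ∈ Cset A x, w g := by
    have h1 : ∑ g ∈ Cset A x, ((μ g : ℚ) + (cnt hh g : ℚ)) =
        (∑ g ∈ Cset A x, (μ g : ℚ)) + N := by
      rw [Finset.sum_add_distrib, cnt_total A x hh hhmem]
    rw [h1] at hcompare
    have h2 : ∑ g ∈ Cset A x, w g =
        (∑ g ∈ Cset A x, ls g) - ∑ g ∈ Cset A x, (μ g : ℚ) := by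
      rw [← Finset.sum_sub_distrib]
    rw [h2]
    linarith
  -- supp nonempty
  have hsne : (supp A x ls).Nonempty := by
    rw [Finset.nonempty_iff_ne_empty]
    intro hemp
    apply hx
    have hall : ∀ g ∈ Cset A x, ls g = 0 := by
      intro g hg
      by_contra hne
      have : g ∈ supp A x ls := Finset.mem_filter.mpr ⟨hg, hne⟩
      rw [hemp] at this
      exact absurd this (Finset.notMem_empty g)
    have : qc x = 0 := by
      rw [← hsum]
      exact Finset.sum_eq_zero fun g hg => by rw [hall g hg, zero_smul]
    funext j
    have := congrFun this j
    simpa [qc] using this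
  -- strict bound
  set s := (supp A x ls).card with hsdef
  have hwsum : ∑ g ∈ Cset A x, w g = ∑ g ∈ supp A x ls, w g := by
    refine (Finset.sum_subset (supp_subset A x ls) fun g hg hns => ?_).symm
    have h0 : ls g = 0 := not_mem_supp A x hg hns
    rw [hwdef]
    simp only
    rw [h0, hμ0 g h0]
    norm_num
  have hstrict : ∑ g ∈ supp A x ls, w g < s := by
    have : ∑ g ∈ supp A x ls, w g < ∑ g ∈ supp A x ls, (1 : ℚ) :=
      Finset.sum_lt_sum_of_nonempty hsne fun g _ => by
        rw [hwdef]; simp only; exact hμlt g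
    simpa [hsdef] using this
  have hNs : N + 1 ≤ s := by
    have : (N : ℚ) < s := by
      rw [hwsum] at hNle
      linarith
    exact_mod_cast this
  -- s ≤ n
  have hsn : s ≤ n := by
    have h1 := hind.fintype_card_le_finrank
    rw [Fintype.card_coe] at h1
    rw [Module.finrank_fin_fun ℚ] at h1  -- fix name maybe
    exact h1
  -- build the final data
  have hcard : Fintype.card ↥(supp A x ls) = s := Fintype.card_coe _
  let e : ↥(supp A x ls) ≃ Fin s := Fintype.equivFinOfCardEq hcard
  refine ⟨s + N, by omega, Fin.append (fun i => μ ((e.symm i : ↥(supp A x ls)) : Fin n → ℤ))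
      (fun _ => 1),
    Fin.append (fun i => ((e.symm i : ↥(supp A x ls)) : Fin n → ℤ)) hh, ?_, ?_, ?_⟩
  · intro i
    refine Fin.addCases (fun i => ?_) (fun k => ?_) i
    · rw [Fin.append_left]
      exact ((mem_Cset A x).mp (supp_subset A x ls (e.symm i).2)).1
    · rw [Fin.append_right]
      exact (hhprop k).1
  · intro i j
    refine Fin.addCases (fun i => ?_) (fun k => ?_) i
    · rw [Fin.append_left]
      exact (((mem_Cset A x).mp (supp_subset A x ls (e.symm i).2)).2 j).1
    · rw [Fin.append_right]
      exact ((conf_trans (hhprop k).2 hconf_r) j).1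
  · rw [Fin.sum_univ_add]
    have hleft : ∑ i : Fin s,
        ((Fin.append (fun i => μ ((e.symm i : ↥(supp A x ls)) : Fin n → ℤ))
          (fun _ => 1) (Fin.castAdd N i) : ℕ) : ℤ) •
          Fin.append (fun i => ((e.symm i : ↥(supp A x ls)) : Fin n → ℤ)) hh
            (Fin.castAdd N i) =
        ∑ g ∈ Cset A x, (μ g : ℤ) • g := by
      have h1 : ∀ i : Fin s,
          ((Fin.append (fun i => μ ((e.symm i : ↥(supp A x ls)) : Fin n → ℤ))
            (fun _ => 1) (Fin.castAdd N i) : ℕ) : ℤ) •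
            Fin.append (fun i => ((e.symm i : ↥(supp A x ls)) : Fin n → ℤ)) hh
              (Fin.castAdd N i) =
          (μ ((e.symm i : ↥(supp A x ls)) : Fin n → ℤ) : ℤ) •
            ((e.symm i : ↥(supp A x ls)) : Fin n → ℤ) := by
        intro i
        rw [Fin.append_left, Fin.append_left]
      rw [Finset.sum_congr rfl fun i _ => h1 i]
      rw [Equiv.sum_comp e.symm (fun gg : ↥(supp A x ls) =>
        (μ (gg : Fin n → ℤ) : ℤ) • (gg : Fin n → ℤ))]
      rw [Finset.sum_coe_sort (supp A x ls) (fun g => (μ g : ℤ) • g)]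
      refine Finset.sum_subset (supp_subset A x ls) fun g hg hns => ?_
      rw [hμ0 g (not_mem_supp A x hg hns), Nat.cast_zero, zero_smul]
    have hright : ∑ k : Fin N,
        ((Fin.append (fun i => μ ((e.symm i : ↥(supp A x ls)) : Fin n → ℤ))
          (fun _ => 1) (Fin.natAdd s k) : ℕ) : ℤ) •
          Fin.append (fun i => ((e.symm i : ↥(supp A x ls)) : Fin n → ℤ)) hh
            (Fin.natAdd s k) = r := by
      have h1 : ∀ k : Fin N,
          ((Fin.append (fun i => μ ((e.symm i : ↥(supp A x ls)) : Fin n → ℤ))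
            (fun _ => 1) (Fin.natAdd s k) : ℕ) : ℤ) •
            Fin.append (fun i => ((e.symm i : ↥(supp A x ls)) : Fin n → ℤ)) hh
              (Fin.natAdd s k) = hh k := by
        intro k
        rw [Fin.append_right, Fin.append_right, Nat.cast_one, one_smul]
      rw [Finset.sum_congr rfl fun k _ => h1 k, ← hhsum]
    rw [hleft, hright, hrdef]
    abel

end Final

end CC3

/-- Positive integer Carathéodory bound: every nonzero integer kernel
element is a conformal sum of at most 2n-1 Graver basis elements with
nonnegative integer coefficients, all lying in the same orthant as x. -/
theorem conformal_caratheodory (m n : ℕ) (A : Matrix (Fin m) (Fin n) ℤ)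
    (x : Fin n → ℤ) (hx : x ≠ 0) (hAx : A.mulVec x = 0) :
    ∃ (t : ℕ), t ≤ 2 * n - 1 ∧
      ∃ (lam : Fin t → ℕ) (g : Fin t → Fin n → ℤ),
        (∀ i, g i ∈ Graver A) ∧ (∀ i j, g i j * x j ≥ 0) ∧
        x = ∑ i, (lam i : ℤ) • g i := by
  exact CC3.final A x hx hAx
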